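/- Let h₃ = h₃(x¹,x²,y³), h₄ = h₄(x¹,x²,y³) and ḣ₄ = ḣ₄(x¹,x²,y⁴) be C² and nowhere zero, and consider the vertical 2×2 diagonal metric block g₃₃ = h₃, g₄₄ = h₄·ḣ₄, g₃₄ = 0 in the coordinates (y³,y⁴). Define Ĉ^a_{bc} = (1/2) g^{ad}(∂_c g_{bd} + ∂_b g_{cd} − ∂_d g_{bc}) (indices a,b,c,d ∈ {3,4}, ∂₃ = ∂/∂y³, ∂₄ = ∂/∂y⁴) and the vertical Ricci tensor R̂_{bc} = ∂_a Ĉ^a_{bc} − ∂_c Ĉ^a_{ba} + Ĉ^e_{bc} Ĉ^a_{ea} − Ĉ^e_{ba} Ĉ^a_{ec}. Then R̂₃₃/g₃₃ = R̂₄₄/g₄₄ = −(1/(2 h₃ h₄)) [ h₄** − (h₄*)²/(2 h₄) − (h₃* h₄*)/(2 h₃) ], where a* = ∂a/∂y³. In particular the result is independent of the factor ḣ₄(x¹,x²,y⁴), which is the 'effective Killing symmetry' property of the ansatz (equation (eq2b) of the decoupling Theorem 2.6). -/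

import Mathlib

/- STATEMENT 10 (vertical equation (eq2b) of Theorem 2.6, with the 'effective
Killing symmetry'): for the vertical diagonal metric block g₃₃ = h₃(y³),
g₄₄ = h₄(y³)·ḣ₄(y⁴), one has R̂₃₃/g₃₃ = R̂₄₄/g₄₄
= −(1/(2h₃h₄))[h₄** − (h₄*)²/(2h₄) − h₃*h₄*/(2h₃)], independently of ḣ₄.
Coordinates (y³,y⁴) are indexed by `Fin 2` (0 ↦ y³, 1 ↦ y⁴); the parameters
x¹,x² are fixed, so h₃, h₄, ḣ₄ are one-variable functions. -/

noncomputable section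

/-- Partial derivative `∂ f` on ℝ² with coordinates (y³,y⁴). -/
def pd (k : Fin 2) (f : (Fin 2 → ℝ) → ℝ) (u : Fin 2 → ℝ) : ℝ :=
  fderiv ℝ f u (Pi.single k 1)

/-- The vertical metric block `diag(h₃(y³), h₄(y³)·ḣ₄(y⁴))`. -/
def vg (h₃ h₄ hb₄ : ℝ → ℝ) (a b : Fin 2) (u : Fin 2 → ℝ) : ℝ :=
  if a = b then (if a = 0 then h₃ (u 0) else h₄ (u 0) * hb₄ (u 1)) else 0

/-- Its pointwise inverse. -/
def vgInv (h₃ h₄ hb₄ : ℝ → ℝ) (a b : Fin 2) (u : Fin 2 → ℝ) : ℝ :=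
  if a = b then (if a = 0 then (h₃ (u 0))⁻¹ else (h₄ (u 0) * hb₄ (u 1))⁻¹) else 0

/-- `Ĉ^a_{bc} = (1/2) g^{ad}(∂_c g_{bd} + ∂_b g_{cd} − ∂_d g_{bc})`. -/
def Chat (h₃ h₄ hb₄ : ℝ → ℝ) (a b c : Fin 2) (u : Fin 2 → ℝ) : ℝ :=
  (1/2) * ∑ d : Fin 2, vgInv h₃ h₄ hb₄ a d u *
    (pd c (vg h₃ h₄ hb₄ b d) u + pd b (vg h₃ h₄ hb₄ c d) u - pd d (vg h₃ h₄ hb₄ b c) u)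

/-- Vertical Ricci tensor
`R̂_{bc} = ∂_a Ĉ^a_{bc} − ∂_c Ĉ^a_{ba} + Ĉ^e_{bc} Ĉ^a_{ea} − Ĉ^e_{ba} Ĉ^a_{ec}`. -/
def RicV (h₃ h₄ hb₄ : ℝ → ℝ) (b c : Fin 2) (u : Fin 2 → ℝ) : ℝ :=
  (∑ a : Fin 2, pd a (Chat h₃ h₄ hb₄ a b c) u)
    - pd c (fun v => ∑ a : Fin 2, Chat h₃ h₄ hb₄ a b a v) u
    + (∑ e : Fin 2, ∑ a : Fin 2, Chat h₃ h₄ hb₄ e b c u * Chat h₃ h₄ hb₄ a e a u)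
    - ∑ e : Fin 2, ∑ a : Fin 2, Chat h₃ h₄ hb₄ e b a u * Chat h₃ h₄ hb₄ a e c u

lemma hasFDerivAt_comp0 {f : ℝ → ℝ} {u : Fin 2 → ℝ} (hf : DifferentiableAt ℝ f (u 0)) :
    HasFDerivAt (fun v : Fin 2 → ℝ => f (v 0))
      (deriv f (u 0) • (ContinuousLinearMap.proj 0 : (Fin 2 → ℝ) →L[ℝ] ℝ)) u := by
  exact hf.hasDerivAt.comp_hasFDerivAt u (hasFDerivAt_apply 0 u)

lemma hasFDerivAt_comp1 {f : ℝ → ℝ} {u : Fin 2 → ℝ} (hf : DifferentiableAt ℝ f (u 1)) :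
    HasFDerivAt (fun v : Fin 2 → ℝ => f (v 1))
      (deriv f (u 1) • (ContinuousLinearMap.proj 1 : (Fin 2 → ℝ) →L[ℝ] ℝ)) u := by
  exact hf.hasDerivAt.comp_hasFDerivAt u (hasFDerivAt_apply 1 u)

lemma pd0_comp0 (f : ℝ → ℝ) (u : Fin 2 → ℝ) (hf : DifferentiableAt ℝ f (u 0)) :
    pd 0 (fun v => f (v 0)) u = deriv f (u 0) := by
  rw [pd, (hasFDerivAt_comp0 hf).fderiv]; simp

lemma pd1_comp0 (f : ℝ → ℝ) (u : Fin 2 → ℝ) (hf : DifferentiableAt ℝ f (u 0)) :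
    pd 1 (fun v => f (v 0)) u = 0 := by
  rw [pd, (hasFDerivAt_comp0 hf).fderiv]; simp

lemma pd0_comp1 (f : ℝ → ℝ) (u : Fin 2 → ℝ) (hf : DifferentiableAt ℝ f (u 1)) :
    pd 0 (fun v => f (v 1)) u = 0 := by
  rw [pd, (hasFDerivAt_comp1 hf).fderiv]; simp

lemma pd1_comp1 (f : ℝ → ℝ) (u : Fin 2 → ℝ) (hf : DifferentiableAt ℝ f (u 1)) :
    pd 1 (fun v => f (v 1)) u = deriv f (u 1) := by
  rw [pd, (hasFDerivAt_comp1 hf).fderiv]; simp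

lemma pd0_mul (f g : ℝ → ℝ) (u : Fin 2 → ℝ) (hf : DifferentiableAt ℝ f (u 0))
    (hg : DifferentiableAt ℝ g (u 1)) :
    pd 0 (fun v => f (v 0) * g (v 1)) u = deriv f (u 0) * g (u 1) := by
  rw [pd, ((hasFDerivAt_comp0 hf).fun_mul (hasFDerivAt_comp1 hg)).fderiv]
  simp [mul_comm]

lemma pd1_mul (f g : ℝ → ℝ) (u : Fin 2 → ℝ) (hf : DifferentiableAt ℝ f (u 0))
    (hg : DifferentiableAt ℝ g (u 1)) :
    pd 1 (fun v => f (v 0) * g (v 1)) u = f (u 0) * deriv g (u 1) := by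
  rw [pd, ((hasFDerivAt_comp0 hf).fun_mul (hasFDerivAt_comp1 hg)).fderiv]
  simp

lemma pd_const (k : Fin 2) (c : ℝ) (u : Fin 2 → ℝ) : pd k (fun _ => c) u = 0 := by
  simp [pd]

set_option maxHeartbeats 1000000 in
theorem vertical_ricci_effective_killing
    (h₃ h₄ hb₄ : ℝ → ℝ)
    (hh₃ : ContDiff ℝ 2 h₃) (hh₄ : ContDiff ℝ 2 h₄) (hhb₄ : ContDiff ℝ 2 hb₄)
    (hh₃0 : ∀ s, h₃ s ≠ 0) (hh₄0 : ∀ s, h₄ s ≠ 0) (hhb₄0 : ∀ s, hb₄ s ≠ 0) :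
    ∀ u : Fin 2 → ℝ,
      RicV h₃ h₄ hb₄ 0 0 u / (h₃ (u 0))
        = -(1 / (2 * h₃ (u 0) * h₄ (u 0))) *
            (deriv (deriv h₄) (u 0) - (deriv h₄ (u 0)) ^ 2 / (2 * h₄ (u 0))
              - deriv h₃ (u 0) * deriv h₄ (u 0) / (2 * h₃ (u 0))) ∧
      RicV h₃ h₄ hb₄ 1 1 u / (h₄ (u 0) * hb₄ (u 1))
        = -(1 / (2 * h₃ (u 0) * h₄ (u 0))) *
            (deriv (deriv h₄) (u 0) - (deriv h₄ (u 0)) ^ 2 / (2 * h₄ (u 0))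
              - deriv h₃ (u 0) * deriv h₄ (u 0) / (2 * h₃ (u 0))) := by
  have d3 : Differentiable ℝ h₃ := hh₃.differentiable two_ne_zero
  have d4 : Differentiable ℝ h₄ := hh₄.differentiable two_ne_zero
  have db : Differentiable ℝ hb₄ := hhb₄.differentiable two_ne_zero
  have d3' : Differentiable ℝ (deriv h₃) :=
    ((contDiff_succ_iff_deriv.mp
      (show ContDiff ℝ (1+1) h₃ by exact_mod_cast hh₃)).2.2).differentiable one_ne_zero
  have d4' : Differentiable ℝ (deriv h₄) :=
    ((contDiff_succ_iff_deriv.mp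
      (show ContDiff ℝ (1+1) h₄ by exact_mod_cast hh₄)).2.2).differentiable one_ne_zero
  have db' : Differentiable ℝ (deriv hb₄) :=
    ((contDiff_succ_iff_deriv.mp
      (show ContDiff ℝ (1+1) hb₄ by exact_mod_cast hhb₄)).2.2).differentiable one_ne_zero
  have vg00 : vg h₃ h₄ hb₄ 0 0 = fun v => h₃ (v 0) := by funext v; simp [vg]
  have vg11 : vg h₃ h₄ hb₄ 1 1 = fun v => h₄ (v 0) * hb₄ (v 1) := by funext v; simp [vg]
  have vg01 : vg h₃ h₄ hb₄ 0 1 = fun _ => (0:ℝ) := by funext v; simp [vg]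
  have vg10 : vg h₃ h₄ hb₄ 1 0 = fun _ => (0:ℝ) := by funext v; simp [vg]
  have C000 : Chat h₃ h₄ hb₄ 0 0 0 = fun v => deriv h₃ (v 0) / (2 * h₃ (v 0)) := by
    funext w
    simp [Chat, Fin.sum_univ_two, vg00, vg01, vg10, vg11, vgInv,
      pd0_comp0 h₃ w (d3 _), pd1_comp0 h₃ w (d3 _),
      pd0_mul h₄ hb₄ w (d4 _) (db _), pd1_mul h₄ hb₄ w (d4 _) (db _), pd_const]
    ring
  have C001 : Chat h₃ h₄ hb₄ 0 0 1 = fun _ => (0:ℝ) := by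
    funext w
    simp [Chat, Fin.sum_univ_two, vg00, vg01, vg10, vg11, vgInv,
      pd0_comp0 h₃ w (d3 _), pd1_comp0 h₃ w (d3 _),
      pd0_mul h₄ hb₄ w (d4 _) (db _), pd1_mul h₄ hb₄ w (d4 _) (db _), pd_const]
  have C010 : Chat h₃ h₄ hb₄ 0 1 0 = fun _ => (0:ℝ) := by
    funext w
    simp [Chat, Fin.sum_univ_two, vg00, vg01, vg10, vg11, vgInv,
      pd0_comp0 h₃ w (d3 _), pd1_comp0 h₃ w (d3 _),
      pd0_mul h₄ hb₄ w (d4 _) (db _), pd1_mul h₄ hb₄ w (d4 _) (db _), pd_const]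
  have C011 : Chat h₃ h₄ hb₄ 0 1 1
      = fun v => -(deriv h₄ (v 0)) / (2 * h₃ (v 0)) * hb₄ (v 1) := by
    funext w
    simp [Chat, Fin.sum_univ_two, vg00, vg01, vg10, vg11, vgInv,
      pd0_comp0 h₃ w (d3 _), pd1_comp0 h₃ w (d3 _),
      pd0_mul h₄ hb₄ w (d4 _) (db _), pd1_mul h₄ hb₄ w (d4 _) (db _), pd_const]
    ring
  have C100 : Chat h₃ h₄ hb₄ 1 0 0 = fun _ => (0:ℝ) := by
    funext w
    simp [Chat, Fin.sum_univ_two, vg00, vg01, vg10, vg11, vgInv,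
      pd0_comp0 h₃ w (d3 _), pd1_comp0 h₃ w (d3 _),
      pd0_mul h₄ hb₄ w (d4 _) (db _), pd1_mul h₄ hb₄ w (d4 _) (db _), pd_const]
  have C101 : Chat h₃ h₄ hb₄ 1 0 1 = fun v => deriv h₄ (v 0) / (2 * h₄ (v 0)) := by
    funext w
    simp [Chat, Fin.sum_univ_two, vg00, vg01, vg10, vg11, vgInv,
      pd0_comp0 h₃ w (d3 _), pd1_comp0 h₃ w (d3 _),
      pd0_mul h₄ hb₄ w (d4 _) (db _), pd1_mul h₄ hb₄ w (d4 _) (db _), pd_const]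
    field_simp [hh₄0, hhb₄0]
  have C110 : Chat h₃ h₄ hb₄ 1 1 0 = fun v => deriv h₄ (v 0) / (2 * h₄ (v 0)) := by
    funext w
    simp [Chat, Fin.sum_univ_two, vg00, vg01, vg10, vg11, vgInv,
      pd0_comp0 h₃ w (d3 _), pd1_comp0 h₃ w (d3 _),
      pd0_mul h₄ hb₄ w (d4 _) (db _), pd1_mul h₄ hb₄ w (d4 _) (db _), pd_const]
    field_simp [hh₄0, hhb₄0]
  have C111 : Chat h₃ h₄ hb₄ 1 1 1 = fun v => deriv hb₄ (v 1) / (2 * hb₄ (v 1)) := by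
    funext w
    simp [Chat, Fin.sum_univ_two, vg00, vg01, vg10, vg11, vgInv,
      pd0_comp0 h₃ w (d3 _), pd1_comp0 h₃ w (d3 _),
      pd0_mul h₄ hb₄ w (d4 _) (db _), pd1_mul h₄ hb₄ w (d4 _) (db _), pd_const]
    field_simp [hh₄0, hhb₄0]
  intro u
  have dφA : DifferentiableAt ℝ (fun y => deriv h₃ y / (2 * h₃ y)) (u 0) :=
    (d3' (u 0)).div ((d3 (u 0)).const_mul 2) (mul_ne_zero two_ne_zero (hh₃0 _))
  have dφB : DifferentiableAt ℝ (fun y => deriv h₄ y / (2 * h₄ y)) (u 0) :=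
    (d4' (u 0)).div ((d4 (u 0)).const_mul 2) (mul_ne_zero two_ne_zero (hh₄0 _))
  have dψ : DifferentiableAt ℝ (fun y => -(deriv h₄ y) / (2 * h₃ y)) (u 0) :=
    ((d4' (u 0)).neg).div ((d3 (u 0)).const_mul 2) (mul_ne_zero two_ne_zero (hh₃0 _))
  have dχ : DifferentiableAt ℝ (fun z => deriv hb₄ z / (2 * hb₄ z)) (u 1) :=
    (db' (u 1)).div ((db (u 1)).const_mul 2) (mul_ne_zero two_ne_zero (hhb₄0 _))
  have hA : pd 0 (fun v => deriv h₃ (v 0) / (2 * h₃ (v 0))) u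
      = deriv (fun y => deriv h₃ y / (2 * h₃ y)) (u 0) := pd0_comp0 _ u dφA
  have hsum0 : pd 0 (fun v => deriv h₃ (v 0) / (2 * h₃ (v 0))
        + deriv h₄ (v 0) / (2 * h₄ (v 0))) u
      = deriv (fun y => deriv h₃ y / (2 * h₃ y) + deriv h₄ y / (2 * h₄ y)) (u 0) :=
    pd0_comp0 _ u (dφA.add dφB)
  have hsum0' : deriv (fun y => deriv h₃ y / (2 * h₃ y) + deriv h₄ y / (2 * h₄ y)) (u 0)
      = deriv (fun y => deriv h₃ y / (2 * h₃ y)) (u 0)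
        + deriv (fun y => deriv h₄ y / (2 * h₄ y)) (u 0) := deriv_add dφA dφB
  have hB2 : deriv (fun y => deriv h₄ y / (2 * h₄ y)) (u 0)
      = (deriv (deriv h₄) (u 0) * (2 * h₄ (u 0))
          - deriv h₄ (u 0) * (2 * deriv h₄ (u 0))) / (2 * h₄ (u 0)) ^ 2 :=
    (((d4' (u 0)).hasDerivAt).div (((d4 (u 0)).hasDerivAt).const_mul 2)
      (mul_ne_zero two_ne_zero (hh₄0 _))).deriv
  have hC : pd 0 (fun v => -(deriv h₄ (v 0)) / (2 * h₃ (v 0)) * hb₄ (v 1)) u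
      = deriv (fun y => -(deriv h₄ y) / (2 * h₃ y)) (u 0) * hb₄ (u 1) :=
    pd0_mul _ _ u dψ (db _)
  have hCd : deriv (fun y => -(deriv h₄ y) / (2 * h₃ y)) (u 0)
      = (-(deriv (deriv h₄) (u 0)) * (2 * h₃ (u 0))
          - -(deriv h₄ (u 0)) * (2 * deriv h₃ (u 0))) / (2 * h₃ (u 0)) ^ 2 :=
    ((((d4' (u 0)).hasDerivAt).neg).div (((d3 (u 0)).hasDerivAt).const_mul 2)
      (mul_ne_zero two_ne_zero (hh₃0 _))).deriv
  have hD : pd 1 (fun v => deriv hb₄ (v 1) / (2 * hb₄ (v 1))) u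
      = deriv (fun z => deriv hb₄ z / (2 * hb₄ z)) (u 1) := pd1_comp1 _ u dχ
  have hE : pd 1 (fun v => -(deriv h₄ (v 0)) / (2 * h₃ (v 0)) * hb₄ (v 1)) u
      = -(deriv h₄ (u 0)) / (2 * h₃ (u 0)) * deriv hb₄ (u 1) :=
    pd1_mul _ _ u dψ (db _)
  have hF : pd 0 (fun v => deriv hb₄ (v 1) / (2 * hb₄ (v 1))) u = 0 := pd0_comp1 _ u dχ
  have A0 : h₃ (u 0) ≠ 0 := hh₃0 _
  have B0 : h₄ (u 0) ≠ 0 := hh₄0 _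
  have D0 : hb₄ (u 1) ≠ 0 := hhb₄0 _
  constructor
  · simp only [RicV, Fin.sum_univ_two, C000, C001, C010, C011, C100, C101, C110, C111,
      pd_const, zero_add, add_zero, hA, hsum0, hsum0', hB2, hC, hD, hE, hF]
    field_simp [A0, B0, D0]
    ring
  · simp only [RicV, Fin.sum_univ_two, C000, C001, C010, C011, C100, C101, C110, C111,
      pd_const, zero_add, add_zero, hA, hsum0, hsum0', hB2, hC, hCd, hD, hE, hF]
    field_simp [A0, B0, D0]
    ring

end
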